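/- Let Q be a sub-rate matrix and let A ⊆ B be subsets of ι. Then for every real t ≥ 0, every x : ι, and every y ∈ A, (Matrix.exp ℝ (t • Q_A)) x y ≤ (Matrix.exp ℝ (t • Q_B)) x y. In particular (taking B = Set.univ, so Q_B = Q) the truncated semigroup bounds the full semigroup from below on A. (Finite-state core of Theorem 2.5(i) and Theorem 1.1(i) of the paper: truncations yield an increasing family of lower bounds.) -/

import Mathlib

/-- Mathlib's exponential, specialized to real matrices (`Matrix.exp ℝ`). -/
noncomputable def Matrix.exp (𝕂 : Type*) [Field 𝕂] {ι : Type*} [Fintype ι] [DecidableEq ι]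
    [Algebra 𝕂 ℝ] (A : Matrix ι ι ℝ) : Matrix ι ι ℝ :=
  (NormedSpace.expSeries 𝕂 (Matrix ι ι ℝ)).sum A

open Classical in
/-- The truncation `Q_A` of `Q` to `A`: every state outside `A` is made absorbing. -/
noncomputable def Matrix.truncation {ι : Type*} (Q : Matrix ι ι ℝ) (A : Set ι) :
    Matrix ι ι ℝ :=
  Matrix.of fun x y => if x ∈ A then Q x y else 0

section Aux

variable {ι : Type*} [Fintype ι] [DecidableEq ι] [Nonempty ι]

private lemma truncation_apply (Q : Matrix ι ι ℝ) (A : Set ι) (x y : ι) [Decidable (x ∈ A)] :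
    Q.truncation A x y = if x ∈ A then Q x y else 0 := by
  simp [Matrix.truncation]

private lemma pow_entry_nonneg (M : Matrix ι ι ℝ) (hM : ∀ x y, 0 ≤ M x y) :
    ∀ (n : ℕ) (x y : ι), 0 ≤ (M ^ n) x y := by
  intro n
  induction n with
  | zero =>
    intro x y
    rw [pow_zero, Matrix.one_apply]
    split <;> norm_num
  | succ n ih =>
    intro x y
    rw [pow_succ, Matrix.mul_apply]
    exact Finset.sum_nonneg fun z _ => mul_nonneg (ih x z) (hM z y)

private lemma shifted_nonneg (Q : Matrix ι ι ℝ) (hMetzler : ∀ x y, x ≠ y → Q x y ≥ 0)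
    (c : ℝ) (hc : ∀ x, 0 ≤ Q x x + c) (hc0 : 0 ≤ c) (S : Set ι) :
    ∀ x y, 0 ≤ (Q.truncation S + c • (1 : Matrix ι ι ℝ)) x y := by
  classical
  intro x y
  simp only [Matrix.add_apply, Matrix.smul_apply, Matrix.one_apply, truncation_apply,
    smul_eq_mul]
  by_cases hx : x ∈ S
  · by_cases hxy : x = y
    · subst hxy
      simp only [hx, if_true, mul_one]
      exact hc x
    · simp only [hx, hxy, if_true, if_false, mul_zero, add_zero]
      exact hMetzler x y hxy
  · by_cases hxy : x = y
    · subst hxy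
      simp [hx, hc0]
    · simp [hx, hxy]

private lemma shifted_zero_row (Q : Matrix ι ι ℝ) (c : ℝ) (A : Set ι) {x y : ι}
    (hx : x ∉ A) (hy : y ∈ A) :
    ∀ n : ℕ, ((Q.truncation A + c • (1 : Matrix ι ι ℝ)) ^ n) x y = 0 := by
  classical
  intro n
  induction n with
  | zero =>
    rw [pow_zero]
    exact Matrix.one_apply_ne (fun h => hx (h ▸ hy))
  | succ n ih =>
    rw [pow_succ', Matrix.mul_apply]
    have hrow : ∀ z, (Q.truncation A + c • (1 : Matrix ι ι ℝ)) x z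
        = if x = z then c else 0 := by
      intro z
      simp only [Matrix.add_apply, Matrix.smul_apply, Matrix.one_apply, truncation_apply,
        smul_eq_mul, hx, if_false, zero_add]
      split <;> simp
    rw [Finset.sum_eq_single x]
    · rw [hrow, if_pos rfl, ih, mul_zero]
    · intro z _ hz
      rw [hrow, if_neg (fun h => hz h.symm), zero_mul]
    · intro h; exact absurd (Finset.mem_univ x) h

private lemma shifted_pow_mono (Q : Matrix ι ι ℝ) (hMetzler : ∀ x y, x ≠ y → Q x y ≥ 0)
    (c : ℝ) (hc : ∀ x, 0 ≤ Q x x + c) (hc0 : 0 ≤ c) (A B : Set ι) (hAB : A ⊆ B) :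
    ∀ (n : ℕ) (x : ι), ∀ y ∈ A,
      ((Q.truncation A + c • (1 : Matrix ι ι ℝ)) ^ n) x y
        ≤ ((Q.truncation B + c • (1 : Matrix ι ι ℝ)) ^ n) x y := by
  classical
  set MA := Q.truncation A + c • (1 : Matrix ι ι ℝ) with hMA
  set MB := Q.truncation B + c • (1 : Matrix ι ι ℝ) with hMB
  have hApos := shifted_nonneg Q hMetzler c hc hc0 A
  have hBpos := shifted_nonneg Q hMetzler c hc hc0 B
  intro n
  induction n with
  | zero => intro x y _; exact le_refl _
  | succ n ih =>
    intro x y hy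
    by_cases hx : x ∈ A
    · rw [pow_succ', pow_succ', Matrix.mul_apply, Matrix.mul_apply]
      refine Finset.sum_le_sum fun z _ => ?_
      have hentry : MA x z = MB x z := by
        simp only [hMA, hMB, Matrix.add_apply, truncation_apply, hx, hAB hx, if_true]
      rw [hentry]
      exact mul_le_mul_of_nonneg_left (ih z y hy) (hBpos x z)
    · rw [shifted_zero_row Q c A hx hy (n + 1)]
      exact pow_entry_nonneg MB hBpos (n + 1) x y

attribute [local instance] Matrix.linftyOpSemiNormedRing Matrix.linftyOpNormedRing
  Matrix.linftyOpNormedAlgebra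

private lemma exp_entry_le (X Y : Matrix ι ι ℝ) (x y : ι)
    (h : ∀ n : ℕ, (X ^ n) x y ≤ (Y ^ n) x y) :
    Matrix.exp ℝ X x y ≤ Matrix.exp ℝ Y x y := by
  have hbound : ∀ M : Matrix ι ι ℝ, ‖M x y‖ ≤ 1 * ‖M‖ := by
    intro M
    rw [one_mul]
    have h1 : ‖M x y‖₊ ≤ ∑ j, ‖M x j‖₊ :=
      Finset.single_le_sum (f := fun j => ‖M x j‖₊) (fun _ _ => zero_le) (Finset.mem_univ y)
    have h2 : (∑ j, ‖M x j‖₊) ≤ ‖M‖₊ := by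
      rw [Matrix.linfty_opNNNorm_def]
      exact Finset.le_sup (f := fun i => ∑ j, ‖M i j‖₊) (Finset.mem_univ x)
    exact_mod_cast h1.trans h2
  let E : Matrix ι ι ℝ →L[ℝ] ℝ :=
    LinearMap.mkContinuous
      { toFun := fun M => M x y
        map_add' := fun _ _ => rfl
        map_smul' := fun _ _ => rfl } 1 hbound
  have hX : HasSum (fun n : ℕ => ((n.factorial : ℝ)⁻¹) • X ^ n) (NormedSpace.exp X) :=
    NormedSpace.exp_series_hasSum_exp' (𝕂 := ℝ) X
  have hY : HasSum (fun n : ℕ => ((n.factorial : ℝ)⁻¹) • Y ^ n) (NormedSpace.exp Y) :=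
    NormedSpace.exp_series_hasSum_exp' (𝕂 := ℝ) Y
  have hX' := hX.mapL E
  have hY' := hY.mapL E
  have := hasSum_le (f := fun n : ℕ => E (((n.factorial : ℝ)⁻¹) • X ^ n))
    (g := fun n : ℕ => E (((n.factorial : ℝ)⁻¹) • Y ^ n)) ?_ hX' hY'
  · rw [Matrix.exp, Matrix.exp, ← NormedSpace.exp_eq_expSeries_sum ℝ]; exact this
  · intro n
    show (((n.factorial : ℝ)⁻¹) • X ^ n) x y ≤ (((n.factorial : ℝ)⁻¹) • Y ^ n) x y
    simp only [Matrix.smul_apply, smul_eq_mul]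
    exact mul_le_mul_of_nonneg_left (h n) (by positivity)

private lemma exp_add_smul_one (X : Matrix ι ι ℝ) (r : ℝ) :
    Matrix.exp ℝ (X + r • (1 : Matrix ι ι ℝ)) = Real.exp r • Matrix.exp ℝ X := by
  have hc : Commute X (r • (1 : Matrix ι ι ℝ)) := (Commute.one_right X).smul_right r
  have h1 : NormedSpace.exp (X + r • (1 : Matrix ι ι ℝ))
      = NormedSpace.exp X * NormedSpace.exp (r • (1 : Matrix ι ι ℝ)) :=
    NormedSpace.exp_add_of_commute hc
  have h2 : NormedSpace.exp (r • (1 : Matrix ι ι ℝ))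
      = Real.exp r • (1 : Matrix ι ι ℝ) := by
    have halg : r • (1 : Matrix ι ι ℝ) = algebraMap ℝ (Matrix ι ι ℝ) r :=
      (Algebra.algebraMap_eq_smul_one r).symm
    erw [halg, ← NormedSpace.algebraMap_exp_comm, ← Real.exp_eq_exp_ℝ,
      Algebra.algebraMap_eq_smul_one]
  rw [Matrix.exp, Matrix.exp, ← NormedSpace.exp_eq_expSeries_sum ℝ]
  rw [h1, h2, mul_smul_comm, mul_one]

end Aux

/-- For a sub-rate matrix `Q` and truncations `A ⊆ B`, the truncated semigroup of `Q_A`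
bounds that of `Q_B` from below on `A` (taking `B = Set.univ`, so that `Q_B = Q`, the
truncated semigroup bounds the full semigroup from below on `A`). -/
theorem matrix_exp_truncation_monotone {ι : Type*} [Fintype ι] [DecidableEq ι] [Nonempty ι]
    (Q : Matrix ι ι ℝ) (hMetzler : ∀ x y, x ≠ y → Q x y ≥ 0)
    (hrow : ∀ x, ∑ y, Q x y ≤ 0) (A B : Set ι) (hAB : A ⊆ B) :
    ∀ t : ℝ, 0 ≤ t → ∀ x : ι, ∀ y ∈ A,
      Matrix.exp ℝ (t • Q.truncation A) x y ≤ Matrix.exp ℝ (t • Q.truncation B) x y := by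
  classical
  intro t ht x y hy
  set c : ℝ := ∑ z, |Q z z| with hcdef
  have hc0 : 0 ≤ c := Finset.sum_nonneg fun z _ => abs_nonneg _
  have hc : ∀ z, 0 ≤ Q z z + c := by
    intro z
    have h1 : |Q z z| ≤ c :=
      Finset.single_le_sum (f := fun w => |Q w w|) (fun _ _ => abs_nonneg _) (Finset.mem_univ z)
    have := neg_abs_le (Q z z)
    linarith
  have hdecomp : ∀ S : Set ι,
      t • Q.truncation S
        = t • (Q.truncation S + c • (1 : Matrix ι ι ℝ)) + (-(t * c)) • (1 : Matrix ι ι ℝ) := by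
    intro S
    module
  have hexp : ∀ S : Set ι,
      Matrix.exp ℝ (t • Q.truncation S)
        = Real.exp (-(t * c)) • Matrix.exp ℝ (t • (Q.truncation S + c • (1 : Matrix ι ι ℝ))) := by
    intro S
    rw [hdecomp S, exp_add_smul_one]
  rw [hexp A, hexp B]
  simp only [Matrix.smul_apply, smul_eq_mul]
  refine mul_le_mul_of_nonneg_left ?_ (Real.exp_pos _).le
  refine exp_entry_le _ _ x y fun n => ?_
  rw [smul_pow, smul_pow]
  simp only [Matrix.smul_apply, smul_eq_mul]
  exact mul_le_mul_of_nonneg_left (shifted_pow_mono Q hMetzler c hc hc0 A B hAB n x y hy)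
    (pow_nonneg ht n)
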